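/- Let g, b ∈ ℝⁿ, c ∈ ℝ, δ > 0, and let H be a symmetric positive-definite n×n real matrix, and suppose a strictly feasible point exists for the problem min { gᵀx : bᵀx + c ≤ 0, xᵀHx ≤ δ }. If λ* > 0 and ν* ≥ 0 maximize the dual function D(λ, ν) = -(1/(2λ))(q + 2νr + ν²s) + νc - λδ/2 over λ ≥ 0, ν ≥ 0 (with q = gᵀH⁻¹g, r = gᵀH⁻¹b, s = bᵀH⁻¹b), then the point x* = -(1/λ*) H⁻¹(g + ν* b) is feasible and attains the primal optimal value, i.e., gᵀx* = min { gᵀx : bᵀx + c ≤ 0, xᵀHx ≤ δ }. -/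

import Mathlib

open BigOperators Matrix

noncomputable section

/-- The dual function of the LQCLP:
`D(λ, ν) = -(1/(2λ))(q + 2νr + ν²s) + νc - λδ/2` with
`q = gᵀH⁻¹g`, `r = gᵀH⁻¹b`, `s = bᵀH⁻¹b`. -/
def dualFn {n : ℕ} (g b : Fin n → ℝ) (c δ : ℝ) (H : Matrix (Fin n) (Fin n) ℝ)
    (lam nu : ℝ) : ℝ :=
  -(1 / (2 * lam)) * ((g ⬝ᵥ (H⁻¹ *ᵥ g)) + 2 * nu * (g ⬝ᵥ (H⁻¹ *ᵥ b))
      + nu ^ 2 * (b ⬝ᵥ (H⁻¹ *ᵥ b)))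
    + nu * c - lam * δ / 2

lemma aux_dot_nonneg {n : ℕ} {M : Matrix (Fin n) (Fin n) ℝ} (hM : M.PosSemidef)
    (v : Fin n → ℝ) : 0 ≤ v ⬝ᵥ (M *ᵥ v) := by simpa using hM.dotProduct_mulVec_nonneg v

lemma aux_symm_dot {n : ℕ} {M : Matrix (Fin n) (Fin n) ℝ} (hM : Mᵀ = M) (u v : Fin n → ℝ) :
    u ⬝ᵥ (M *ᵥ v) = v ⬝ᵥ (M *ᵥ u) := by
  rw [dotProduct_mulVec, ← mulVec_transpose, hM, dotProduct_comm]

set_option maxHeartbeats 2000000 in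
/-- If `(λ*, ν*)` with `λ* > 0`, `ν* ≥ 0` maximizes the dual function, then
`x* = -(1/λ*) H⁻¹ (g + ν* b)` is feasible and attains the primal optimal value. -/
theorem lqclp_primal_recovery
    (n : ℕ) (g b : Fin n → ℝ) (c δ : ℝ) (hδ : 0 < δ)
    (H : Matrix (Fin n) (Fin n) ℝ) (hH : H.PosDef)
    (hfeas : ∃ x : Fin n → ℝ, b ⬝ᵥ x + c < 0 ∧ x ⬝ᵥ (H *ᵥ x) < δ)
    (lam nu : ℝ) (hlam : 0 < lam) (hnu : 0 ≤ nu)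
    (hmax : ∀ l v : ℝ, 0 < l → 0 ≤ v →
      dualFn g b c δ H l v ≤ dualFn g b c δ H lam nu) :
    b ⬝ᵥ ((-(1 / lam)) • (H⁻¹ *ᵥ (g + nu • b))) + c ≤ 0
    ∧ ((-(1 / lam)) • (H⁻¹ *ᵥ (g + nu • b)))
        ⬝ᵥ (H *ᵥ ((-(1 / lam)) • (H⁻¹ *ᵥ (g + nu • b)))) ≤ δ
    ∧ g ⬝ᵥ ((-(1 / lam)) • (H⁻¹ *ᵥ (g + nu • b)))
        = sInf {p : ℝ | ∃ x : Fin n → ℝ,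
            b ⬝ᵥ x + c ≤ 0 ∧ x ⬝ᵥ (H *ᵥ x) ≤ δ ∧ p = g ⬝ᵥ x} := by
  have hHsym : Hᵀ = H := by simpa using hH.1.eq
  have hAsym : (H⁻¹)ᵀ = H⁻¹ := by rw [Matrix.transpose_nonsing_inv, hHsym]
  have hA : (H⁻¹).PosDef := hH.inv
  have hHA : ∀ v : Fin n → ℝ, H *ᵥ (H⁻¹ *ᵥ v) = v := fun v => by
    rw [mulVec_mulVec, Matrix.mul_nonsing_inv _ hH.det_pos.ne'.isUnit, one_mulVec]
  obtain ⟨q, hq⟩ : ∃ q : ℝ, q = g ⬝ᵥ (H⁻¹ *ᵥ g) := ⟨_, rfl⟩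
  obtain ⟨r, hr⟩ : ∃ r : ℝ, r = g ⬝ᵥ (H⁻¹ *ᵥ b) := ⟨_, rfl⟩
  obtain ⟨s, hs⟩ : ∃ s : ℝ, s = b ⬝ᵥ (H⁻¹ *ᵥ b) := ⟨_, rfl⟩
  have hD : ∀ l v : ℝ, dualFn g b c δ H l v
      = -(1 / (2 * l)) * (q + 2 * v * r + v ^ 2 * s) + v * c - l * δ / 2 := by
    intro l v
    simp only [dualFn, ← hq, ← hr, ← hs]
  have hsnn : 0 ≤ s := hs ▸ aux_dot_nonneg hA.posSemidef b
  have hrba : b ⬝ᵥ (H⁻¹ *ᵥ g) = r := hr ▸ aux_symm_dot hAsym b g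
  -- K ≥ 0
  have hKy : (g + nu • b) ⬝ᵥ (H⁻¹ *ᵥ (g + nu • b)) = q + 2 * nu * r + nu ^ 2 * s := by
    simp only [mulVec_add, mulVec_smul, dotProduct_add, add_dotProduct, smul_dotProduct,
      dotProduct_smul, smul_eq_mul, hrba, ← hq, ← hr, ← hs]
    ring
  obtain ⟨K, hK⟩ : ∃ K : ℝ, K = q + 2 * nu * r + nu ^ 2 * s := ⟨_, rfl⟩
  have hKnn : 0 ≤ K := by rw [hK, ← hKy]; exact aux_dot_nonneg hA.posSemidef _
  -- vector computations (done early, before scalar reasoning)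
  set xs : Fin n → ℝ := (-(1 / lam)) • (H⁻¹ *ᵥ (g + nu • b)) with hxs
  have hHxs : H *ᵥ xs = (-(1 / lam)) • (g + nu • b) := by
    rw [hxs, mulVec_smul, hHA]
  have hbxs : b ⬝ᵥ xs = -(1 / lam) * (r + nu * s) := by
    rw [hxs]
    simp only [dotProduct_smul, mulVec_add, mulVec_smul, dotProduct_add, dotProduct_smul,
      smul_eq_mul, hrba, ← hs]
  have hgxs : g ⬝ᵥ xs = -(1 / lam) * (q + nu * r) := by
    rw [hxs]
    simp only [dotProduct_smul, mulVec_add, mulVec_smul, dotProduct_add, dotProduct_smul,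
      smul_eq_mul, ← hq, ← hr]
  have hxsHxs0 : xs ⬝ᵥ (H *ᵥ xs) = K / lam ^ 2 := by
    have h1 : xs ⬝ᵥ (H *ᵥ xs) = (-(1 / lam)) * (g ⬝ᵥ xs + nu * (b ⬝ᵥ xs)) := by
      rw [hHxs]
      simp only [dotProduct_smul, dotProduct_add, dotProduct_smul, smul_eq_mul,
        dotProduct_comm xs g, dotProduct_comm xs b]
    rw [h1, hgxs, hbxs, hK]
    field_simp
    ring
  clear_value xs
  clear hq hr hs hKy
  -- stationarity in λ : K = lam² δ
  have key : ∀ l : ℝ, 0 < l → 0 ≤ (lam - l) * (K - l * lam * δ) := by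
    intro l hl
    have h := hmax l nu hl hnu
    rw [hD, hD] at h
    have hid : (lam - l) * (K - l * lam * δ)
        = 2 * l * lam * ((-(1 / (2 * lam)) * (q + 2 * nu * r + nu ^ 2 * s) - lam * δ / 2)
          - (-(1 / (2 * l)) * (q + 2 * nu * r + nu ^ 2 * s) - l * δ / 2)) := by
      rw [hK]; field_simp; ring
    rw [hid]
    have h0 : 0 ≤ ((-(1 / (2 * lam)) * (q + 2 * nu * r + nu ^ 2 * s) - lam * δ / 2)
          - (-(1 / (2 * l)) * (q + 2 * nu * r + nu ^ 2 * s) - l * δ / 2)) := by linarith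
    have h1 : (0:ℝ) ≤ 2 * l * lam := by positivity
    exact mul_nonneg h1 h0
  have hKpos : 0 < K := by
    rcases hKnn.lt_or_eq with h | h
    · exact h
    · exfalso
      have h2 := key (lam / 2) (by linarith)
      rw [← h] at h2
      nlinarith [mul_pos (mul_pos hlam hlam) hδ]
  have hKeq : K = lam ^ 2 * δ := by
    obtain ⟨L, hL⟩ : ∃ L : ℝ, L = Real.sqrt (K / δ) := ⟨_, rfl⟩
    have hLpos : 0 < L := hL ▸ Real.sqrt_pos.mpr (div_pos hKpos hδ)
    have hL2 : L ^ 2 = K / δ := hL ▸ Real.sq_sqrt (div_pos hKpos hδ).le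
    have hKL : K = L ^ 2 * δ := by rw [hL2]; field_simp
    have h1 := key L hLpos
    have e : (lam - L) * (K - L * lam * δ) = -(L * δ * (lam - L) ^ 2) := by rw [hKL]; ring
    rw [e] at h1
    have h2 : L * δ * (lam - L) ^ 2 = 0 :=
      le_antisymm (by linarith) (by positivity)
    have h3 : (lam - L) ^ 2 = 0 := by
      rcases mul_eq_zero.mp h2 with h | h
      · exact absurd h (by positivity)
      · exact h
    have h4 : lam = L := sub_eq_zero.mp (by nlinarith [sq_nonneg (lam - L)] : lam - L = 0)
    rw [hKL, h4]
  have hxsHxs : xs ⬝ᵥ (H *ᵥ xs) = δ := by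
    rw [hxsHxs0, hKeq]; field_simp
  -- stationarity in ν (multiplied through by 2·lam)
  obtain ⟨β, hβd⟩ : ∃ β : ℝ, β = -(1 / lam) * (r + nu * s) + c := ⟨_, rfl⟩
  have hβeq2 : b ⬝ᵥ xs + c = β := by rw [hbxs, hβd]
  have keyv : ∀ v : ℝ, 0 ≤ v → (v - nu) * (2 * lam * β - (v - nu) * s) ≤ 0 := by
    intro v hv
    have h := hmax lam v hlam hv
    rw [hD, hD] at h
    have hid : (v - nu) * (2 * lam * β - (v - nu) * s)
        = 2 * lam * ((-(1 / (2 * lam)) * (q + 2 * v * r + v ^ 2 * s) + v * c - lam * δ / 2)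
          - (-(1 / (2 * lam)) * (q + 2 * nu * r + nu ^ 2 * s) + nu * c - lam * δ / 2)) := by
      rw [hβd]; field_simp; ring
    rw [hid]
    have h0 : (-(1 / (2 * lam)) * (q + 2 * v * r + v ^ 2 * s) + v * c - lam * δ / 2)
          - (-(1 / (2 * lam)) * (q + 2 * nu * r + nu ^ 2 * s) + nu * c - lam * δ / 2) ≤ 0 := by
      linarith
    exact mul_nonpos_of_nonneg_of_nonpos (by positivity) h0
  have hβle : β ≤ 0 := by
    by_contra hβ'
    push_neg at hβ'
    rcases hsnn.lt_or_eq with hspos | hs0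
    · have hv : 0 ≤ nu + lam * β / s := by
        have : 0 < lam * β / s := div_pos (mul_pos hlam hβ') hspos
        linarith
      have h := keyv (nu + lam * β / s) hv
      have hexp : (nu + lam * β / s - nu) * (2 * lam * β - (nu + lam * β / s - nu) * s)
          = lam ^ 2 * β ^ 2 / s := by field_simp; ring
      rw [hexp] at h
      have : 0 < lam ^ 2 * β ^ 2 / s :=
        div_pos (mul_pos (pow_pos hlam 2) (pow_pos hβ' 2)) hspos
      linarith
    · have h := keyv (nu + 1) (by linarith)
      rw [← hs0] at h
      nlinarith [mul_pos hlam hβ']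
  have hcomp : nu * β = 0 := by
    rcases hnu.lt_or_eq with hnupos | hnu0
    swap
    · rw [← hnu0]; ring
    have hβeq : β = 0 := by
      rcases hβle.lt_or_eq with hβneg | h
      swap
      · exact h
      exfalso
      rcases hsnn.lt_or_eq with hspos | hs0
      · obtain ⟨t, ht⟩ : ∃ t : ℝ, t = min nu (-(lam * β) / s) := ⟨_, rfl⟩
        have hlb : 0 < -(lam * β) := by nlinarith [mul_neg_of_pos_of_neg hlam hβneg]
        have htpos : 0 < t := by rw [ht]; exact lt_min hnupos (div_pos hlb hspos)
        have htnu : t ≤ nu := by rw [ht]; exact min_le_left _ _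
        have hts : t ≤ -(lam * β) / s := by rw [ht]; exact min_le_right _ _
        have h2 : t * s ≤ -(lam * β) := (le_div_iff₀ hspos).mp hts
        have hkv := keyv (nu - t) (by linarith)
        have hexp : (nu - t - nu) * (2 * lam * β - (nu - t - nu) * s)
            = -t * (2 * lam * β + t * s) := by ring
        rw [hexp] at hkv
        have h6 : t * (lam * β) < 0 := mul_neg_of_pos_of_neg htpos (mul_neg_of_pos_of_neg hlam hβneg)
        have h7 : t * (t * s) ≤ t * (-(lam * β)) := mul_le_mul_of_nonneg_left h2 htpos.le
        linarith [hkv, h6, h7]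
      · have hkv := keyv 0 le_rfl
        rw [← hs0] at hkv
        linarith [hkv, mul_neg_of_pos_of_neg (mul_pos hnupos hlam) hβneg]
    rw [hβeq]; ring
  have hfeas1 : b ⬝ᵥ xs + c ≤ 0 := by rw [hβeq2]; exact hβle
  have hfeas2 : xs ⬝ᵥ (H *ᵥ xs) ≤ δ := le_of_eq hxsHxs
  refine ⟨hfeas1, hfeas2, ?_⟩
  -- optimality
  have hopt : ∀ x : Fin n → ℝ, b ⬝ᵥ x + c ≤ 0 → x ⬝ᵥ (H *ᵥ x) ≤ δ → g ⬝ᵥ xs ≤ g ⬝ᵥ x := by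
    intro x hx1 hx2
    have hxHxs : x ⬝ᵥ (H *ᵥ xs) = -(1 / lam) * (g ⬝ᵥ x + nu * (b ⬝ᵥ x)) := by
      rw [hHxs]
      simp only [dotProduct_smul, dotProduct_add, dotProduct_smul, smul_eq_mul,
        dotProduct_comm x g, dotProduct_comm x b]
    have hxHxs' : lam * (x ⬝ᵥ (H *ᵥ xs)) = -(g ⬝ᵥ x + nu * (b ⬝ᵥ x)) := by
      rw [hxHxs]; field_simp
    have hexpand : (x - xs) ⬝ᵥ (H *ᵥ (x - xs))
        = x ⬝ᵥ (H *ᵥ x) - 2 * (x ⬝ᵥ (H *ᵥ xs)) + xs ⬝ᵥ (H *ᵥ xs) := by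
      rw [mulVec_sub, dotProduct_sub, sub_dotProduct, sub_dotProduct,
        aux_symm_dot hHsym xs x]
      ring
    have hΔ0 : 0 ≤ (x - xs) ⬝ᵥ (H *ᵥ (x - xs)) := aux_dot_nonneg hH.posSemidef _
    have hΔ : 0 ≤ x ⬝ᵥ (H *ᵥ x) - 2 * (x ⬝ᵥ (H *ᵥ xs)) + δ := by
      rw [hexpand, hxsHxs] at hΔ0; exact hΔ0
    have hA1 : 0 ≤ lam * (x ⬝ᵥ (H *ᵥ x) - 2 * (x ⬝ᵥ (H *ᵥ xs)) + δ) := mul_nonneg hlam.le hΔ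
    have h1 : 0 ≤ lam * (δ - x ⬝ᵥ (H *ᵥ x)) := mul_nonneg hlam.le (by linarith)
    have h2 : nu * (b ⬝ᵥ x + c) ≤ 0 := mul_nonpos_of_nonneg_of_nonpos hnu hx1
    -- g⬝xs = -(lam*δ) + nu*c
    have hcs : nu * (b ⬝ᵥ xs + c) = 0 := by rw [hβeq2]; exact hcomp
    have hgxs2 : lam * (g ⬝ᵥ xs) = -(lam ^ 2 * δ) + lam * (nu * c) := by
      have e1 : lam * (g ⬝ᵥ xs) = -(q + nu * r) := by rw [hgxs]; field_simp
      have e2 : lam * (b ⬝ᵥ xs) = -(r + nu * s) := by rw [hbxs]; field_simp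
      have e3 : lam * (nu * (b ⬝ᵥ xs + c)) = 0 := by rw [hcs]; ring
      have e2' : nu * (lam * (b ⬝ᵥ xs)) = nu * (-(r + nu * s)) := by rw [e2]
      linarith [e1, e2', e3, hK, hKeq]
    have hgxs3 : g ⬝ᵥ xs = -(lam * δ) + nu * c :=
      mul_left_cancel₀ hlam.ne' (by rw [hgxs2]; ring)
    linarith [hA1, hxHxs', h1, h2, hgxs3]
  have hmem : (g ⬝ᵥ xs) ∈ {p : ℝ | ∃ x : Fin n → ℝ,
      b ⬝ᵥ x + c ≤ 0 ∧ x ⬝ᵥ (H *ᵥ x) ≤ δ ∧ p = g ⬝ᵥ x} := ⟨xs, hfeas1, hfeas2, rfl⟩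
  apply le_antisymm
  · apply le_csInf ⟨_, hmem⟩
    rintro p ⟨x, hx1, hx2, rfl⟩
    exact hopt x hx1 hx2
  · exact csInf_le ⟨g ⬝ᵥ xs, by rintro p ⟨x, hx1, hx2, rfl⟩; exact hopt x hx1 hx2⟩ hmem
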